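/- Let A be an algebraically closed field and f1 = f2 = X1, f3 = X1·X2 − 1 in A[X1,X2]. Then every annihilator Q ∈ A[Y1,Y2,Y3] of (f1,f2,f3) is divisible by Y1 − Y2; in particular every annihilator has zero constant term, yet the system f1 = f2 = f3 = 0 has no common zero in A^2. -/

import Mathlib

open MvPolynomial

private lemma aeval_eq_eval' {A : Type*} [CommSemiring A] {n : ℕ}
    (y : Fin n → A) (p : MvPolynomial (Fin n) A) : aeval y p = eval y p := by
  rw [← coe_aeval_eq_eval]; rfl

private lemma phi_injective {A : Type*} [Field A] [IsAlgClosed A] :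
    Function.Injective (aeval (R := A) ![(X 0 : MvPolynomial (Fin 2) A), X 0 * X 1 - 1]) := by
  set φ := aeval (R := A) ![(X 0 : MvPolynomial (Fin 2) A), X 0 * X 1 - 1] with hφ
  rw [injective_iff_map_eq_zero]
  intro P hP
  by_contra hne
  have hXP : (X 0 : MvPolynomial (Fin 2) A) * P ≠ 0 := mul_ne_zero (X_ne_zero 0) hne
  have hex : ¬ ∀ x : Fin 2 → A, eval x ((X 0 : MvPolynomial (Fin 2) A) * P) = eval x 0 :=
    fun h => hXP (MvPolynomial.funext h)
  push_neg at hex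
  obtain ⟨x, hx⟩ := hex
  simp only [map_mul, eval_X, map_zero] at hx
  have h0 : x 0 ≠ 0 := fun h => hx (by rw [h, zero_mul])
  have hPx : eval x P ≠ 0 := fun h => hx (by rw [h, mul_zero])
  set y : Fin 2 → A := ![x 0, (x 1 + 1) / x 0] with hy
  have key : aeval y (φ P) = eval x P := by
    rw [hφ, comp_aeval_apply]
    have : (fun i => aeval (R := A) y (![(X 0 : MvPolynomial (Fin 2) A), X 0 * X 1 - 1] i)) = x := by
      funext i
      fin_cases i
      · simp [hy]
      · simp only [Fin.mk_one, Matrix.cons_val_one, Matrix.cons_val_zero, Matrix.head_cons, map_sub, map_mul, map_one, aeval_X]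
        simp only [hy, Matrix.cons_val_zero, Matrix.cons_val_one, Matrix.head_cons]
        field_simp
        ring
    rw [this, aeval_eq_eval']
  rw [hP, map_zero] at key
  exact hPx key.symm

private lemma sub_dvd_aux {A : Type*} [CommRing A] (Q : MvPolynomial (Fin 3) A) :
    (X 0 - X 1 : MvPolynomial (Fin 3) A) ∣
      Q - aeval ![(X 0 : MvPolynomial (Fin 3) A), X 0, X 2] Q := by
  induction Q using MvPolynomial.induction_on with
  | C a => simp
  | add p q hp hq =>
      have : p + q - aeval ![(X 0 : MvPolynomial (Fin 3) A), X 0, X 2] (p + q)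
          = (p - aeval ![(X 0 : MvPolynomial (Fin 3) A), X 0, X 2] p)
            + (q - aeval ![(X 0 : MvPolynomial (Fin 3) A), X 0, X 2] q) := by
        rw [map_add]; ring
      rw [this]; exact dvd_add hp hq
  | mul_X p i hp =>
      set σ := aeval (R := A) ![(X 0 : MvPolynomial (Fin 3) A), X 0, X 2] with hσ
      have heq : p * X i - σ (p * X i)
          = (p - σ p) * X i + σ p * (X i - σ (X i)) := by
        rw [map_mul]; ring
      rw [heq]
      refine dvd_add (Dvd.dvd.mul_right hp _) (Dvd.dvd.mul_left ?_ _)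
      fin_cases i <;> simp [hσ, aeval_X]
      exact ⟨-1, by ring⟩

/-- For `f₁ = f₂ = X₁`, `f₃ = X₁X₂ - 1`: every annihilator is divisible by `Y₁ - Y₂` (so has
zero constant term), yet the system `f₁ = f₂ = f₃ = 0` has no common zero in `A²`. -/
theorem image_not_closed_example {A : Type*} [Field A] [IsAlgClosed A] :
    (∀ Q : MvPolynomial (Fin 3) A,
        aeval ![(X 0 : MvPolynomial (Fin 2) A), X 0, X 0 * X 1 - 1] Q = 0 →
          (X 0 - X 1 : MvPolynomial (Fin 3) A) ∣ Q ∧ constantCoeff Q = 0) ∧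
    (¬ ∃ a : Fin 2 → A, eval a (X 0 : MvPolynomial (Fin 2) A) = 0 ∧
        eval a (X 0 * X 1 - 1 : MvPolynomial (Fin 2) A) = 0) := by
  constructor
  · intro Q hQ
    -- factor the annihilation map through τ : collapse Y₁ to Y₀
    set τ := aeval (R := A) (![(X 0 : MvPolynomial (Fin 2) A), X 0, X 1]) with hτ
    have hcomp : aeval (R := A) ![(X 0 : MvPolynomial (Fin 2) A), X 0 * X 1 - 1] (τ Q)
        = aeval ![(X 0 : MvPolynomial (Fin 2) A), X 0, X 0 * X 1 - 1] Q := by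
      rw [hτ, comp_aeval_apply]
      have hfun : (fun i => aeval (R := A) ![(X 0 : MvPolynomial (Fin 2) A), X 0 * X 1 - 1]
            (![(X 0 : MvPolynomial (Fin 2) A), X 0, X 1] i))
          = ![(X 0 : MvPolynomial (Fin 2) A), X 0, X 0 * X 1 - 1] := by
        funext i; fin_cases i <;> simp
      rw [hfun]
    have hτQ : τ Q = 0 := by
      apply phi_injective
      rw [hcomp, hQ, map_zero]
    have hσQ : aeval ![(X 0 : MvPolynomial (Fin 3) A), X 0, X 2] Q = 0 := by
      have : aeval ![(X 0 : MvPolynomial (Fin 3) A), X 0, X 2] Q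
          = aeval (R := A) ![(X 0 : MvPolynomial (Fin 3) A), X 2] (τ Q) := by
        rw [hτ, comp_aeval_apply]
        have hfun : (fun i => aeval (R := A) ![(X 0 : MvPolynomial (Fin 3) A), X 2]
              (![(X 0 : MvPolynomial (Fin 2) A), X 0, X 1] i))
            = ![(X 0 : MvPolynomial (Fin 3) A), X 0, X 2] := by
          funext i; fin_cases i <;> simp
        rw [hfun]
      rw [this, hτQ, map_zero]
    have hdvd : (X 0 - X 1 : MvPolynomial (Fin 3) A) ∣ Q := by
      have := sub_dvd_aux Q
      rwa [hσQ, sub_zero] at this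
    refine ⟨hdvd, ?_⟩
    obtain ⟨R, hR⟩ := hdvd
    rw [hR, map_mul, map_sub, constantCoeff_X, constantCoeff_X, sub_self, zero_mul]
  · rintro ⟨a, h1, h2⟩
    simp only [eval_X] at h1
    simp only [map_sub, map_mul, eval_X, map_one, h1, zero_mul, zero_sub, neg_eq_zero] at h2
    exact one_ne_zero h2
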